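/- Fix a prime ℓ, a positive integer a, and an integer k coprime to ℓ. The number of matrices M ∈ GL₂(ℤ/ℓᵃℤ) with M ≢ I (mod ℓ) and det M ≡ k (mod ℓᵃ) equals ℓ^{3(a-1)}·(ℓ³−ℓ−1) if k ≡ 1 (mod ℓ), and ℓ^{3(a-1)}·(ℓ³−ℓ) if k ≢ 1 (mod ℓ). -/
import Mathlib

open Finset

/-- card of a graph -/
lemma graph_card {α β : Type*} [Fintype α] [Fintype β] [DecidableEq α] [DecidableEq β]
    (g : α → β) :
    (Finset.univ.filter fun x : α × β => x.2 = g x.1).card = Fintype.card α := by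
  have h : (Finset.univ.filter fun x : α × β => x.2 = g x.1)
      = Finset.univ.image (fun a : α => (a, g a)) := by
    ext ⟨a, b⟩
    simp [Prod.ext_iff, eq_comm, and_comm]
  rw [h, Finset.card_image_of_injective _ (fun a b hab => (Prod.mk.injEq _ _ _ _).mp hab |>.1),
    Finset.card_univ]

lemma graph_card' {α β : Type*} [Fintype α] [Fintype β] [DecidableEq α] [DecidableEq β]
    (g : β → α) :
    (Finset.univ.filter fun x : α × β => x.1 = g x.2).card = Fintype.card β := by
  have h : (Finset.univ.filter fun x : α × β => x.1 = g x.2)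
      = Finset.univ.image (fun b : β => (g b, b)) := by
    ext ⟨a, b⟩
    simp [Prod.ext_iff, eq_comm, and_comm]
  rw [h, Finset.card_image_of_injective _ (fun a b hab => (Prod.mk.injEq _ _ _ _).mp hab |>.2),
    Finset.card_univ]

lemma card_filter_prod {α β : Type*} [Fintype α] [Fintype β] (p : α × β → Prop)
    [DecidablePred p] :
    (Finset.univ.filter p).card
      = ∑ a : α, (Finset.univ.filter fun b : β => p (a, b)).card := by
  rw [Finset.card_filter, ← Finset.univ_product_univ, Finset.sum_product]
  exact Finset.sum_congr rfl fun a _ => (Finset.card_filter _ _).symm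

open Finset

lemma fiber_card {ℓ : ℕ} (hℓ : ℓ.Prime) {a : ℕ} (ha : 1 ≤ a) (h : ℓ ∣ ℓ ^ a) :
    ∀ c : ZMod ℓ,
    haveI : NeZero ℓ := ⟨hℓ.pos.ne'⟩
    haveI : NeZero (ℓ ^ a) := ⟨pow_ne_zero _ hℓ.pos.ne'⟩
    (Finset.univ.filter fun x : ZMod (ℓ ^ a) =>
        ZMod.castHom h (ZMod ℓ) x = c).card = ℓ ^ (a - 1) := by
  haveI : NeZero ℓ := ⟨hℓ.pos.ne'⟩
  haveI : NeZero (ℓ ^ a) := ⟨pow_ne_zero _ hℓ.pos.ne'⟩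
  set r := ZMod.castHom h (ZMod ℓ) with hr
  have hsurj : ∀ c : ZMod ℓ, ∃ x : ZMod (ℓ ^ a), r x = c := by
    intro c
    exact ⟨(c.val : ZMod (ℓ ^ a)), by rw [map_natCast]; exact ZMod.natCast_rightInverse c⟩
  have heq : ∀ c₁ c₂ : ZMod ℓ,
      (Finset.univ.filter fun x : ZMod (ℓ ^ a) => r x = c₁).card
        = (Finset.univ.filter fun x : ZMod (ℓ ^ a) => r x = c₂).card := by
    intro c₁ c₂
    obtain ⟨x₀, hx₀⟩ := hsurj (c₂ - c₁)
    refine Finset.card_bij' (fun x _ => x + x₀) (fun y _ => y - x₀) ?_ ?_ ?_ ?_ <;>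
      intro x hx <;> simp only [Finset.mem_filter, Finset.mem_univ, true_and, map_add,
        map_sub, hx₀] at hx ⊢ <;> [skip; skip; ring; ring]
    · rw [hx]; ring
    · rw [hx]; ring
  intro c
  have hsum : ∑ c' : ZMod ℓ, (Finset.univ.filter fun x : ZMod (ℓ ^ a) => r x = c').card
      = ℓ ^ a := by
    rw [← Finset.card_eq_sum_card_fiberwise (fun x _ => Finset.mem_univ (r x)),
      Finset.card_univ, ZMod.card]
  rw [Finset.sum_congr rfl fun c' _ => heq c' c] at hsum
  rw [Finset.sum_const, Finset.card_univ, ZMod.card, smul_eq_mul] at hsum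
  have : ℓ ^ a = ℓ * ℓ ^ (a - 1) := by
    conv_lhs => rw [show a = 1 + (a - 1) by omega]
    rw [pow_add, pow_one]
  have := hsum.trans this
  exact Nat.eq_of_mul_eq_mul_left hℓ.pos this

lemma isUnit_iff_red {ℓ : ℕ} (hℓ : ℓ.Prime) {a : ℕ} (ha : 1 ≤ a) (h : ℓ ∣ ℓ ^ a)
    (x : ZMod (ℓ ^ a)) :
    IsUnit x ↔ ZMod.castHom h (ZMod ℓ) x ≠ 0 := by
  haveI : NeZero ℓ := ⟨hℓ.pos.ne'⟩
  haveI : NeZero (ℓ ^ a) := ⟨pow_ne_zero _ hℓ.pos.ne'⟩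
  haveI : Fact (1 < ℓ) := ⟨hℓ.one_lt⟩
  constructor
  · intro hx h0
    have := hx.map (ZMod.castHom h (ZMod ℓ))
    rw [h0] at this
    exact not_isUnit_zero this
  · intro hx
    have hxv : ((x.val : ℕ) : ZMod (ℓ ^ a)) = x := ZMod.natCast_rightInverse x
    rw [← hxv] at hx ⊢
    rw [map_natCast] at hx
    rw [ZMod.isUnit_iff_coprime, Nat.coprime_pow_right_iff (by omega), Nat.coprime_comm,
      hℓ.coprime_iff_not_dvd]
    intro hdvd
    exact hx ((ZMod.natCast_eq_zero_iff _ _).mpr hdvd)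

open Finset

lemma k_ne_zero {ℓ : ℕ} (hℓ : ℓ.Prime) {k : ℤ} (hk : IsCoprime k (ℓ : ℤ)) :
    (k : ZMod ℓ) ≠ 0 := by
  haveI : Fact (1 < ℓ) := ⟨hℓ.one_lt⟩
  have h1 := hk.map (Int.castRingHom (ZMod ℓ))
  have h2 : (Int.castRingHom (ZMod ℓ)) (ℓ : ℤ) = 0 := by
    rw [map_natCast, ZMod.natCast_self]
  rw [h2] at h1
  exact (isCoprime_zero_right.mp h1).ne_zero

lemma k_isUnit {ℓ : ℕ} (a : ℕ) {k : ℤ} (hk : IsCoprime k (ℓ : ℤ)) :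
    IsUnit ((k : ZMod (ℓ ^ a))) := by
  have h1 := (hk.pow_right (n := a)).map (Int.castRingHom (ZMod (ℓ ^ a)))
  have h2 : (Int.castRingHom (ZMod (ℓ ^ a))) ((ℓ : ℤ) ^ a) = 0 := by
    have h3 : ((ℓ : ℤ) ^ a) = ((ℓ ^ a : ℕ) : ℤ) := by push_cast; ring
    rw [h3, map_natCast, ZMod.natCast_self]
  rw [h2] at h1
  exact isCoprime_zero_right.mp h1

lemma inner_count {ℓ : ℕ} (hℓ : ℓ.Prime) {a : ℕ} (ha : 1 ≤ a) (h : ℓ ∣ ℓ ^ a) (k : ℤ)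
    (hk : IsCoprime k (ℓ : ℤ)) :
    haveI : NeZero (ℓ ^ a) := ⟨pow_ne_zero _ hℓ.pos.ne'⟩
    ∀ A B : ZMod (ℓ ^ a),
    (Finset.univ.filter fun cd : ZMod (ℓ ^ a) × ZMod (ℓ ^ a) =>
        A * cd.2 - B * cd.1 = (k : ZMod (ℓ ^ a))).card
      = if ZMod.castHom h (ZMod ℓ) A ≠ 0 ∨ ZMod.castHom h (ZMod ℓ) B ≠ 0
        then ℓ ^ a else 0 := by
  haveI : NeZero ℓ := ⟨hℓ.pos.ne'⟩
  haveI : NeZero (ℓ ^ a) := ⟨pow_ne_zero _ hℓ.pos.ne'⟩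
  intro A B
  set r := ZMod.castHom h (ZMod ℓ) with hr
  by_cases hA : r A ≠ 0
  · rw [if_pos (Or.inl hA)]
    obtain ⟨u, hu⟩ := (isUnit_iff_red hℓ ha h A).mpr hA
    have hcong : ∀ cd : ZMod (ℓ ^ a) × ZMod (ℓ ^ a),
        (A * cd.2 - B * cd.1 = (k : ZMod (ℓ ^ a)))
          ↔ cd.2 = ↑u⁻¹ * ((k : ZMod (ℓ ^ a)) + B * cd.1) := by
      intro cd
      rw [Units.eq_inv_mul_iff_mul_eq, hu, sub_eq_iff_eq_add]
    rw [Finset.filter_congr fun x _ => hcong x]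
    exact (graph_card fun c : ZMod (ℓ ^ a) =>
      (↑u⁻¹ : ZMod (ℓ ^ a)) * ((k : ZMod (ℓ ^ a)) + B * c)).trans (ZMod.card (ℓ ^ a))
  · push_neg at hA
    by_cases hB : r B ≠ 0
    · rw [if_pos (Or.inr hB)]
      obtain ⟨u, hu⟩ := (isUnit_iff_red hℓ ha h B).mpr hB
      have hcong : ∀ cd : ZMod (ℓ ^ a) × ZMod (ℓ ^ a),
          (A * cd.2 - B * cd.1 = (k : ZMod (ℓ ^ a)))
            ↔ cd.1 = ↑u⁻¹ * (A * cd.2 - (k : ZMod (ℓ ^ a))) := by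
        intro cd
        rw [Units.eq_inv_mul_iff_mul_eq, hu]
        constructor <;> intro hh <;> linear_combination -hh
      rw [Finset.filter_congr fun x _ => hcong x]
      exact (graph_card' fun d : ZMod (ℓ ^ a) =>
        (↑u⁻¹ : ZMod (ℓ ^ a)) * (A * d - (k : ZMod (ℓ ^ a)))).trans (ZMod.card (ℓ ^ a))
    · push_neg at hB
      rw [if_neg (by simp [hA, hB])]
      rw [Finset.card_eq_zero, Finset.filter_eq_empty_iff]
      intro cd _ hcd
      apply k_ne_zero hℓ hk
      have := congrArg r hcd
      rw [map_sub, map_mul, map_mul, hA, hB, map_intCast] at this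
      simpa using this.symm

open Finset

lemma ite_one_zero_and (p q : Prop) [Decidable p] [Decidable q] :
    (if p ∧ q then (1 : ℕ) else 0) = (if p then 1 else 0) * (if q then 1 else 0) := by
  split_ifs <;> simp_all

lemma total_count {ℓ : ℕ} (hℓ : ℓ.Prime) {a : ℕ} (ha : 1 ≤ a) (h : ℓ ∣ ℓ ^ a) (k : ℤ)
    (hk : IsCoprime k (ℓ : ℤ)) :
    haveI : NeZero (ℓ ^ a) := ⟨pow_ne_zero _ hℓ.pos.ne'⟩
    (Finset.univ.filter fun x : (ZMod (ℓ ^ a) × ZMod (ℓ ^ a)) × (ZMod (ℓ ^ a) × ZMod (ℓ ^ a)) =>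
        x.1.1 * x.2.2 - x.1.2 * x.2.1 = (k : ZMod (ℓ ^ a))).card
      = ℓ ^ (3 * (a - 1)) * (ℓ ^ 3 - ℓ) := by
  haveI : NeZero ℓ := ⟨hℓ.pos.ne'⟩
  haveI : NeZero (ℓ ^ a) := ⟨pow_ne_zero _ hℓ.pos.ne'⟩
  set R := ZMod (ℓ ^ a)
  set r := ZMod.castHom h (ZMod ℓ) with hr
  rw [card_filter_prod]
  have h1 : ∀ ab : R × R,
      (Finset.univ.filter fun cd : R × R =>
        ab.1 * cd.2 - ab.2 * cd.1 = (k : R)).card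
      = if r ab.1 ≠ 0 ∨ r ab.2 ≠ 0 then ℓ ^ a else 0 :=
    fun ab => inner_count hℓ ha h k hk ab.1 ab.2
  rw [Finset.sum_congr rfl fun ab _ => h1 ab, Finset.sum_ite, Finset.sum_const,
    Finset.sum_const_zero, add_zero, smul_eq_mul]
  have hneg : (Finset.univ.filter fun ab : R × R => ¬(r ab.1 ≠ 0 ∨ r ab.2 ≠ 0)).card
      = ℓ ^ (a - 1) * ℓ ^ (a - 1) := by
    have heq : (Finset.univ.filter fun ab : R × R => ¬(r ab.1 ≠ 0 ∨ r ab.2 ≠ 0))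
        = ((Finset.univ.filter fun x : R => r x = 0) ×ˢ
            (Finset.univ.filter fun x : R => r x = 0)) := by
      rw [← Finset.filter_product, Finset.univ_product_univ]
      exact Finset.filter_congr fun x _ => by push_neg; rfl
    rw [heq, Finset.card_product, fiber_card hℓ ha h 0]
  have htot := Finset.card_filter_add_card_filter_not
    (s := (Finset.univ : Finset (R × R))) (p := fun ab => r ab.1 ≠ 0 ∨ r ab.2 ≠ 0)
  rw [hneg, Finset.card_univ, Fintype.card_prod, ZMod.card] at htot
  have hP := Nat.eq_sub_of_add_eq htot
  rw [hP]
  obtain ⟨e, rfl⟩ : ∃ e, a = e + 1 := ⟨a - 1, by omega⟩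
  simp only [Nat.add_sub_cancel]
  rw [Nat.sub_mul]
  rw [show ℓ ^ (e + 1) * ℓ ^ (e + 1) * ℓ ^ (e + 1) = ℓ ^ (3 * e) * ℓ ^ 3 by ring,
    show ℓ ^ e * ℓ ^ e * ℓ ^ (e + 1) = ℓ ^ (3 * e) * ℓ by ring,
    ← Nat.mul_sub]

open Finset

lemma ker_inner {ℓ : ℕ} (hℓ : ℓ.Prime) {a : ℕ} (ha : 1 ≤ a) (h : ℓ ∣ ℓ ^ a) (k : ℤ)
    (hk : IsCoprime k (ℓ : ℤ)) :
    haveI : NeZero (ℓ ^ a) := ⟨pow_ne_zero _ hℓ.pos.ne'⟩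
    ∀ A B C : ZMod (ℓ ^ a),
    (Finset.univ.filter fun d : ZMod (ℓ ^ a) =>
        (A * d - B * C = (k : ZMod (ℓ ^ a))) ∧
        (ZMod.castHom h (ZMod ℓ) A = 1 ∧ ZMod.castHom h (ZMod ℓ) B = 0 ∧
          ZMod.castHom h (ZMod ℓ) C = 0 ∧ ZMod.castHom h (ZMod ℓ) d = 1)).card
      = if (ZMod.castHom h (ZMod ℓ) A = 1 ∧ ZMod.castHom h (ZMod ℓ) B = 0 ∧
            ZMod.castHom h (ZMod ℓ) C = 0) ∧ (k : ZMod ℓ) = 1 then 1 else 0 := by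
  haveI : NeZero ℓ := ⟨hℓ.pos.ne'⟩
  haveI : NeZero (ℓ ^ a) := ⟨pow_ne_zero _ hℓ.pos.ne'⟩
  haveI : Fact (1 < ℓ) := ⟨hℓ.one_lt⟩
  intro A B C
  set r := ZMod.castHom h (ZMod ℓ) with hr
  by_cases h1 : r A = 1 ∧ r B = 0 ∧ r C = 0
  · obtain ⟨u, hu⟩ := (isUnit_iff_red hℓ ha h A).mpr (by rw [h1.1]; exact one_ne_zero)
    obtain ⟨d₀, hd₀⟩ : ∃ d₀ : ZMod (ℓ ^ a), d₀ = ↑u⁻¹ * ((k : ZMod (ℓ ^ a)) + B * C) :=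
      ⟨_, rfl⟩
    have hd : ∀ d : ZMod (ℓ ^ a), (A * d - B * C = (k : ZMod (ℓ ^ a))) ↔ d = d₀ := by
      intro d
      rw [hd₀, Units.eq_inv_mul_iff_mul_eq, hu, sub_eq_iff_eq_add]
    have hA0 : A * d₀ = (k : ZMod (ℓ ^ a)) + B * C := by
      have h2 := (hd d₀).mpr rfl
      linear_combination h2
    have hrd : r d₀ = (k : ZMod ℓ) := by
      have h2 : r A * r d₀ = r (A * d₀) := (map_mul r A d₀).symm
      rw [hA0, map_add, map_mul, map_intCast, h1.1, h1.2.1] at h2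
      simpa using h2
    by_cases hk1 : (k : ZMod ℓ) = 1
    · rw [if_pos ⟨h1, hk1⟩]
      have heq : (Finset.univ.filter fun d : ZMod (ℓ ^ a) =>
          (A * d - B * C = (k : ZMod (ℓ ^ a))) ∧
          (r A = 1 ∧ r B = 0 ∧ r C = 0 ∧ r d = 1)) = {d₀} := by
        ext d
        simp only [Finset.mem_filter, Finset.mem_univ, true_and, Finset.mem_singleton, hd d]
        constructor
        · rintro ⟨h2, _⟩; exact h2
        · intro h2; exact ⟨h2, h1.1, h1.2.1, h1.2.2, by rw [h2, hrd, hk1]⟩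
      rw [heq, Finset.card_singleton]
    · rw [if_neg (by tauto), Finset.card_eq_zero, Finset.filter_eq_empty_iff]
      intro d _ hd2
      exact hk1 (by rw [← hrd, ← (hd d).mp hd2.1]; exact hd2.2.2.2.2)
  · rw [if_neg (by tauto), Finset.card_eq_zero, Finset.filter_eq_empty_iff]
    intro d _ hd2
    exact h1 ⟨hd2.2.1, hd2.2.2.1, hd2.2.2.2.1⟩

lemma ker_count {ℓ : ℕ} (hℓ : ℓ.Prime) {a : ℕ} (ha : 1 ≤ a) (h : ℓ ∣ ℓ ^ a) (k : ℤ)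
    (hk : IsCoprime k (ℓ : ℤ)) :
    haveI : NeZero (ℓ ^ a) := ⟨pow_ne_zero _ hℓ.pos.ne'⟩
    (Finset.univ.filter fun x : (ZMod (ℓ ^ a) × ZMod (ℓ ^ a)) × (ZMod (ℓ ^ a) × ZMod (ℓ ^ a)) =>
        (x.1.1 * x.2.2 - x.1.2 * x.2.1 = (k : ZMod (ℓ ^ a))) ∧
        (ZMod.castHom h (ZMod ℓ) x.1.1 = 1 ∧ ZMod.castHom h (ZMod ℓ) x.1.2 = 0 ∧
          ZMod.castHom h (ZMod ℓ) x.2.1 = 0 ∧ ZMod.castHom h (ZMod ℓ) x.2.2 = 1)).card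
      = if (k : ZMod ℓ) = 1 then ℓ ^ (3 * (a - 1)) else 0 := by
  haveI : NeZero ℓ := ⟨hℓ.pos.ne'⟩
  haveI : NeZero (ℓ ^ a) := ⟨pow_ne_zero _ hℓ.pos.ne'⟩
  set R := ZMod (ℓ ^ a)
  set r := ZMod.castHom h (ZMod ℓ) with hr
  rw [card_filter_prod]
  calc (∑ ab : R × R, (Finset.univ.filter fun cd : R × R =>
          (ab.1 * cd.2 - ab.2 * cd.1 = (k : R)) ∧
          (r ab.1 = 1 ∧ r ab.2 = 0 ∧ r cd.1 = 0 ∧ r cd.2 = 1)).card)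
      = ∑ ab : R × R, ∑ C : R, (Finset.univ.filter fun d : R =>
          (ab.1 * d - ab.2 * C = (k : R)) ∧
          (r ab.1 = 1 ∧ r ab.2 = 0 ∧ r C = 0 ∧ r d = 1)).card :=
        Finset.sum_congr rfl fun ab _ => card_filter_prod _
    _ = ∑ ab : R × R, ∑ C : R,
          if (r ab.1 = 1 ∧ r ab.2 = 0 ∧ r C = 0) ∧ (k : ZMod ℓ) = 1 then 1 else 0 :=
        Finset.sum_congr rfl fun ab _ => Finset.sum_congr rfl fun C _ =>
          ker_inner hℓ ha h k hk ab.1 ab.2 C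
    _ = if (k : ZMod ℓ) = 1 then ℓ ^ (3 * (a - 1)) else 0 := by
        by_cases hk1 : (k : ZMod ℓ) = 1
        · simp only [hk1, eq_self_iff_true, and_true, if_true]
          have hin : ∀ ab : R × R,
              (∑ C : R, if r ab.1 = 1 ∧ r ab.2 = 0 ∧ r C = 0 then (1 : ℕ) else 0)
                = if r ab.1 = 1 ∧ r ab.2 = 0 then ℓ ^ (a - 1) else 0 := by
            intro ab
            by_cases h12 : r ab.1 = 1 ∧ r ab.2 = 0
            · rw [if_pos h12]
              have hcg : ∀ C : R, (r ab.1 = 1 ∧ r ab.2 = 0 ∧ r C = 0) ↔ (r C = 0) :=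
                fun C => by tauto
              simp_rw [hcg]
              rw [← Finset.card_filter, fiber_card hℓ ha h 0]
            · rw [if_neg h12]
              exact Finset.sum_eq_zero fun C _ => if_neg (by tauto)
          rw [Finset.sum_congr rfl fun ab _ => hin ab, Finset.sum_ite, Finset.sum_const,
            Finset.sum_const_zero, add_zero, smul_eq_mul]
          have heq2 : (Finset.univ.filter fun ab : R × R => r ab.1 = 1 ∧ r ab.2 = 0)
              = ((Finset.univ.filter fun y : R => r y = 1) ×ˢ
                  (Finset.univ.filter fun y : R => r y = 0)) := by
            rw [← Finset.univ_product_univ]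
            exact Finset.filter_product (fun y : R => r y = 1) (fun y : R => r y = 0)
          rw [heq2, Finset.card_product, fiber_card hℓ ha h 1, fiber_card hℓ ha h 0]
          obtain ⟨e, rfl⟩ : ∃ e, a = e + 1 := ⟨a - 1, by omega⟩
          simp only [Nat.add_sub_cancel]
          ring
        · simp only [hk1, and_false, if_false, Finset.sum_const_zero]

open Finset

/-- Count of `M ∈ GL₂(ℤ/ℓᵃℤ)` with `M ≢ I (mod ℓ)` and `det M ≡ k (mod ℓᵃ)`. -/
theorem stmt1 (ℓ : ℕ) (hℓ : ℓ.Prime) (a : ℕ) (ha : 1 ≤ a) (k : ℤ)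
    (hk : IsCoprime k (ℓ : ℤ)) :
    Nat.card {M : GL (Fin 2) (ZMod (ℓ ^ a)) //
      Matrix.GeneralLinearGroup.map
        (ZMod.castHom (dvd_pow_self ℓ (Nat.one_le_iff_ne_zero.mp ha)) (ZMod ℓ)) M ≠ 1 ∧
      (M : Matrix (Fin 2) (Fin 2) (ZMod (ℓ ^ a))).det = (k : ZMod (ℓ ^ a))} =
      if (k : ZMod ℓ) = 1 then ℓ ^ (3 * (a - 1)) * (ℓ ^ 3 - ℓ - 1)
      else ℓ ^ (3 * (a - 1)) * (ℓ ^ 3 - ℓ) := by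
  haveI : NeZero ℓ := ⟨hℓ.pos.ne'⟩
  haveI : NeZero (ℓ ^ a) := ⟨pow_ne_zero _ hℓ.pos.ne'⟩
  have h : ℓ ∣ ℓ ^ a := dvd_pow_self ℓ (Nat.one_le_iff_ne_zero.mp ha)
  set R := ZMod (ℓ ^ a) with hR
  set r := ZMod.castHom h (ZMod ℓ) with hr
  -- entrywise description of the reduction condition
  have hmap1 : ∀ M : Matrix (Fin 2) (Fin 2) R,
      (M.map r = 1) ↔ (r (M 0 0) = 1 ∧ r (M 0 1) = 0 ∧ r (M 1 0) = 0 ∧ r (M 1 1) = 1) := by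
    intro M
    rw [← Matrix.ext_iff]
    simp only [Fin.forall_fin_two, Matrix.map_apply, Matrix.one_apply]
    norm_num
    tauto
  have hglmap : ∀ M : GL (Fin 2) R,
      (Matrix.GeneralLinearGroup.map r M = 1) ↔ ((M : Matrix (Fin 2) (Fin 2) R).map r = 1) := by
    intro M
    rw [Units.ext_iff]
    exact Iff.rfl
  -- the tuple-level predicate
  set P : (R × R) × (R × R) → Prop := fun x =>
    (¬(r x.1.1 = 1 ∧ r x.1.2 = 0 ∧ r x.2.1 = 0 ∧ r x.2.2 = 1)) ∧
      (x.1.1 * x.2.2 - x.1.2 * x.2.1 = (k : R)) with hP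
  have hcard : Nat.card {M : GL (Fin 2) R //
      Matrix.GeneralLinearGroup.map r M ≠ 1 ∧
      (M : Matrix (Fin 2) (Fin 2) R).det = (k : R)} = (Finset.univ.filter P).card := by
    set mat : ((R × R) × (R × R)) → Matrix (Fin 2) (Fin 2) R :=
      fun x => !![x.1.1, x.1.2; x.2.1, x.2.2] with hmat
    have hdetm : ∀ x : (R × R) × (R × R), P x → IsUnit ((mat x).det) := by
      intro x hx
      rw [hmat]
      simp only []
      rw [Matrix.det_fin_two_of, hx.2]
      exact k_isUnit a hk
    have fwd : ∀ M : {M : GL (Fin 2) R //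
        Matrix.GeneralLinearGroup.map r M ≠ 1 ∧
        (M : Matrix (Fin 2) (Fin 2) R).det = (k : R)},
        P ((((M : GL (Fin 2) R) : Matrix (Fin 2) (Fin 2) R) 0 0,
            ((M : GL (Fin 2) R) : Matrix (Fin 2) (Fin 2) R) 0 1),
           (((M : GL (Fin 2) R) : Matrix (Fin 2) (Fin 2) R) 1 0,
            ((M : GL (Fin 2) R) : Matrix (Fin 2) (Fin 2) R) 1 1)) := by
      rintro ⟨M, hM1, hM2⟩
      refine ⟨fun hc => hM1 ((hglmap M).mpr ((hmap1 _).mpr hc)), ?_⟩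
      rw [← Matrix.det_fin_two]
      exact hM2
    have bwd : ∀ x : {x : (R × R) × (R × R) // P x},
        Matrix.GeneralLinearGroup.map r
            ((Matrix.nonsingInvUnit (mat x.val) (hdetm x.val x.prop)) : GL (Fin 2) R) ≠ 1 ∧
        (((Matrix.nonsingInvUnit (mat x.val) (hdetm x.val x.prop)) :
            GL (Fin 2) R) : Matrix (Fin 2) (Fin 2) R).det = (k : R) := by
      rintro ⟨x, hx⟩
      constructor
      · intro hc
        apply hx.1
        have h2 := (hmap1 (mat x)).mp ((hglmap _).mp hc)
        rw [hmat] at h2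
        simpa using h2
      · show (mat x).det = (k : R)
        rw [hmat]
        simp only []
        rw [Matrix.det_fin_two_of]
        exact hx.2
    have e : {M : GL (Fin 2) R //
        Matrix.GeneralLinearGroup.map r M ≠ 1 ∧
        (M : Matrix (Fin 2) (Fin 2) R).det = (k : R)} ≃
        {x : (R × R) × (R × R) // P x} :=
      { toFun := fun M => ⟨_, fwd M⟩
        invFun := fun x => ⟨Matrix.nonsingInvUnit (mat x.val) (hdetm x.val x.prop), bwd x⟩
        left_inv := by
          intro M
          apply Subtype.ext
          apply Units.ext
          show mat _ = ((M : GL (Fin 2) R) : Matrix (Fin 2) (Fin 2) R)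
          rw [hmat]
          exact (Matrix.eta_fin_two _).symm
        right_inv := by
          intro x
          apply Subtype.ext
          show ((mat x.val 0 0, mat x.val 0 1), (mat x.val 1 0, mat x.val 1 1)) = x.val
          rw [hmat]
          simp }
    rw [Nat.card_congr e, Nat.card_eq_fintype_card, Fintype.card_subtype]
  rw [hcard]
  -- partition
  have hsplit := Finset.card_filter_add_card_filter_not
    (s := Finset.univ.filter fun x : (R × R) × (R × R) =>
      x.1.1 * x.2.2 - x.1.2 * x.2.1 = (k : R))
    (p := fun x => r x.1.1 = 1 ∧ r x.1.2 = 0 ∧ r x.2.1 = 0 ∧ r x.2.2 = 1)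
  rw [Finset.filter_filter, Finset.filter_filter] at hsplit
  have hPeq : Finset.univ.filter P = Finset.univ.filter
      (fun x : (R × R) × (R × R) => (x.1.1 * x.2.2 - x.1.2 * x.2.1 = (k : R)) ∧
        ¬(r x.1.1 = 1 ∧ r x.1.2 = 0 ∧ r x.2.1 = 0 ∧ r x.2.2 = 1)) :=
    Finset.filter_congr fun x _ => by rw [hP]; tauto
  rw [hPeq]
  have hT := total_count hℓ ha h k hk
  have hB := ker_count hℓ ha h k hk
  rw [hT] at hsplit
  rw [hB] at hsplit
  by_cases hk1 : (k : ZMod ℓ) = 1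
  · rw [if_pos hk1] at hsplit ⊢
    rw [show ℓ ^ (3 * (a - 1)) * (ℓ ^ 3 - ℓ - 1)
        = ℓ ^ (3 * (a - 1)) * (ℓ ^ 3 - ℓ) - ℓ ^ (3 * (a - 1)) by
      rw [Nat.mul_sub, mul_one]]
    omega
  · rw [if_neg hk1] at hsplit ⊢
    omega
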